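/- arXiv:2504.14991 — 6 statements merged into one kernel-verified Lean document; each statement's English description precedes it below -/
import Mathlib

section
/- Let G be a nonempty finite index set and let w : G → ℝ be a probability vector with strictly positive entries. For all real numbers t1, t2 with 1 < t2 ≤ t1, one has (Σ_g w_g^{1-t2})^{1/t2} ≤ (Σ_g w_g^{1-t1})^{1/t1}. Equivalently, the signed fairness metric f(w;t) = sign(1−t)·(Σ_g w_g^{1-t})^{1/t} is monotonically nonincreasing in t on the interval (1, ∞). -/
/-- Monotonicity of the signed fairness metric on `(1, ∞)`: for `1 < t2 ≤ t1`,
`(∑ g, w g ^ (1 - t2)) ^ (1 / t2) ≤ (∑ g, w g ^ (1 - t1)) ^ (1 / t1)`, i.e. the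
signed metric `f(w;t) = sign(1-t) · (∑ g, w g ^ (1-t))^(1/t)` is nonincreasing in `t`
on `(1, ∞)`. -/
theorem fairness_metric_mono_gt_one
    {G : Type*} [Fintype G] [Nonempty G] (w : G → ℝ)
    (hpos : ∀ g, 0 < w g) (hsum : ∑ g, w g = 1)
    (t1 t2 : ℝ) (ht2 : 1 < t2) (ht : t2 ≤ t1) :
    (∑ g, w g ^ ((1 : ℝ) - t2)) ^ ((1 : ℝ) / t2) ≤
      (∑ g, w g ^ ((1 : ℝ) - t1)) ^ ((1 : ℝ) / t1) := by
  have ht2' : (0:ℝ) < t2 := lt_trans one_pos ht2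
  have ht1' : (0:ℝ) < t1 := lt_of_lt_of_le ht2' ht
  set p : ℝ := t1 / t2 with hp
  have hp1 : 1 ≤ p := (one_le_div ht2').mpr ht
  have key := Real.arith_mean_le_rpow_mean (Finset.univ) w
      (fun g => (w g) ^ (-t2)) (fun g _ => (hpos g).le) hsum
      (fun g _ => Real.rpow_nonneg (hpos g).le _) hp1
  have h1 : ∀ g : G, w g * (w g) ^ (-t2) = w g ^ ((1:ℝ) - t2) := by
    intro g
    rw [sub_eq_add_neg, Real.rpow_add (hpos g), Real.rpow_one]
  have h2 : ∀ g : G, w g * ((w g) ^ (-t2)) ^ p = w g ^ ((1:ℝ) - t1) := by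
    intro g
    rw [← Real.rpow_mul (hpos g).le]
    have : -t2 * p = -t1 := by
      field_simp [hp]
      rw [hp]; field_simp
    rw [this, sub_eq_add_neg, Real.rpow_add (hpos g), Real.rpow_one]
  simp only [h1, h2] at key
  have hS1 : (0:ℝ) ≤ ∑ g, w g ^ ((1:ℝ) - t1) :=
    Finset.sum_nonneg fun g _ => Real.rpow_nonneg (hpos g).le _
  have hLHS : (0:ℝ) ≤ ∑ g, w g ^ ((1:ℝ) - t2) :=
    Finset.sum_nonneg fun g _ => Real.rpow_nonneg (hpos g).le _
  calc (∑ g, w g ^ ((1 : ℝ) - t2)) ^ ((1 : ℝ) / t2)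
      ≤ ((∑ g, w g ^ ((1:ℝ) - t1)) ^ ((1:ℝ) / p)) ^ ((1:ℝ)/t2) := by
        apply Real.rpow_le_rpow hLHS key (by positivity)
    _ = (∑ g, w g ^ ((1 : ℝ) - t1)) ^ ((1 : ℝ) / t1) := by
        rw [← Real.rpow_mul hS1]
        congr 1
        field_simp [hp]
        rw [hp]; field_simp
end

section
/- Let G be a nonempty finite index set and let w : G → ℝ be a probability vector with strictly positive entries. For all real numbers t1, t2 with 0 < t2 ≤ t1 < 1, one has (Σ_g w_g^{1-t2})^{1/t2} ≤ (Σ_g w_g^{1-t1})^{1/t1}; that is, the fairness metric f(w;t) = (Σ_g w_g^{1-t})^{1/t} is monotonically nondecreasing in t on the interval (0,1). -/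
/-- Monotonicity of the fairness metric on `(0, 1)`: for `0 < t2 ≤ t1 < 1`,
`(∑ g, w g ^ (1 - t2)) ^ (1 / t2) ≤ (∑ g, w g ^ (1 - t1)) ^ (1 / t1)`, i.e. the
fairness metric `f(w;t) = (∑ g, w g ^ (1-t))^(1/t)` is nondecreasing in `t` on `(0,1)`. -/
theorem fairness_metric_mono_lt_one
    {G : Type*} [Fintype G] [Nonempty G] (w : G → ℝ)
    (hpos : ∀ g, 0 < w g) (hsum : ∑ g, w g = 1)
    (t1 t2 : ℝ) (ht2 : 0 < t2) (ht : t2 ≤ t1) (ht1 : t1 < 1) :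
    (∑ g, w g ^ ((1 : ℝ) - t2)) ^ ((1 : ℝ) / t2) ≤
      (∑ g, w g ^ ((1 : ℝ) - t1)) ^ ((1 : ℝ) / t1) := by
  have ht1pos : 0 < t1 := lt_of_lt_of_le ht2 ht
  set p : ℝ := t1 / t2 with hp
  have hp1 : 1 ≤ p := (one_le_div ht2).mpr ht
  have key := Real.rpow_arith_mean_le_arith_mean_rpow Finset.univ w
      (fun g => w g ^ (-t2)) (fun g _ => (hpos g).le) hsum
      (fun g _ => (Real.rpow_pos_of_pos (hpos g) _).le) hp1
  have e2 : ∀ g, w g * w g ^ (-t2) = w g ^ ((1:ℝ) - t2) := by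
    intro g
    rw [sub_eq_add_neg, Real.rpow_add (hpos g), Real.rpow_one]
  have e1 : ∀ g, w g * (w g ^ (-t2)) ^ p = w g ^ ((1:ℝ) - t1) := by
    intro g
    have hep : -t2 * p = -t1 := by rw [hp]; field_simp
    rw [← Real.rpow_mul (hpos g).le, hep, sub_eq_add_neg,
      Real.rpow_add (hpos g), Real.rpow_one]
  simp only [e2, e1] at key
  have hS2 : (0:ℝ) ≤ ∑ g, w g ^ ((1:ℝ) - t2) :=
    Finset.sum_nonneg fun g _ => (Real.rpow_pos_of_pos (hpos g) _).le
  have step : ((∑ g, w g ^ ((1:ℝ) - t2)) ^ p) ^ ((1:ℝ)/t1)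
      ≤ (∑ g, w g ^ ((1:ℝ) - t1)) ^ ((1:ℝ)/t1) :=
    Real.rpow_le_rpow (Real.rpow_nonneg hS2 _) key (by positivity)
  calc (∑ g, w g ^ ((1:ℝ) - t2)) ^ ((1:ℝ)/t2)
      = ((∑ g, w g ^ ((1:ℝ) - t2)) ^ p) ^ ((1:ℝ)/t1) := by
        rw [← Real.rpow_mul hS2]
        congr 1
        rw [hp]
        field_simp
    _ ≤ _ := step
end

section
/- Let G be a nonempty finite index set, v : G → ℝ a vector with strictly positive entries, and t a real number with 0 < t < 1. Set S = Σ_h v_h, and define F(v) = Σ_h (v_h/S)^{1-t}. Fix g ∈ G and let D_g be the partial derivative of F with respect to the coordinate v_g at the point v (i.e., the derivative at x = v_g of the function x ↦ (x/(S−v_g+x))^{1-t} + Σ_{h≠g} (v_h/(S−v_g+x))^{1-t}). Define the threshold θ = (Σ_h v_h / Σ_h v_h^{1-t})^{1/t}. Then D_g > 0 if and only if v_g < θ, D_g = 0 if and only if v_g = θ, and D_g < 0 if and only if v_g > θ. -/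
/-- Rich/poor threshold for `0 < t < 1`. Let `S = ∑ h, v h`,
`F(v) = ∑ h, (v h / S) ^ (1-t)`, and let `Dg` be the partial derivative of `F` in
the coordinate `v g` at `v`, i.e. the derivative at `x = v g` of
`x ↦ (x / (S - v g + x)) ^ (1-t) + ∑ _{h ≠ g} (v h / (S - v g + x)) ^ (1-t)`.
With threshold `θ = (∑ h, v h / ∑ h, v h ^ (1-t)) ^ (1/t)` we have
`Dg > 0 ↔ v g < θ`, `Dg = 0 ↔ v g = θ`, and `Dg < 0 ↔ v g > θ`. -/
theorem rich_poor_threshold_lt_one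
    {G : Type*} [Fintype G] [Nonempty G] [DecidableEq G] (v : G → ℝ)
    (hpos : ∀ g, 0 < v g) (t : ℝ) (ht0 : 0 < t) (ht1 : t < 1)
    (S : ℝ) (hS : S = ∑ h, v h) (g : G) (Dg : ℝ)
    (hD : HasDerivAt
      (fun x : ℝ =>
        (x / (S - v g + x)) ^ ((1 : ℝ) - t) +
          ∑ h ∈ Finset.univ.erase g, (v h / (S - v g + x)) ^ ((1 : ℝ) - t))
      Dg (v g))
    (θ : ℝ) (hθ : θ = ((∑ h, v h) / ∑ h, v h ^ ((1 : ℝ) - t)) ^ ((1 : ℝ) / t)) :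
    (0 < Dg ↔ v g < θ) ∧ (Dg = 0 ↔ v g = θ) ∧ (Dg < 0 ↔ θ < v g) := by
  have hvg : 0 < v g := hpos g
  have hSpos : 0 < S := by
    rw [hS]; exact Finset.sum_pos (fun i _ => hpos i) Finset.univ_nonempty
  have hSne : S ≠ 0 := hSpos.ne'
  set p : ℝ := 1 - t with hp
  have hppos : 0 < p := by simp only [hp]; linarith
  have hval : S - v g + v g = S := by ring
  -- derivative of the denominator
  have hden : HasDerivAt (fun x : ℝ => S - v g + x) 1 (v g) := by
    simpa using (hasDerivAt_id (v g)).const_add (S - v g)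
  have hden_ne : (fun x : ℝ => S - v g + x) (v g) ≠ 0 := by simpa [hval] using hSne
  -- first term
  have h1 : HasDerivAt (fun x : ℝ => x / (S - v g + x))
      ((S - v g) / S ^ 2) (v g) := by
    have := (hasDerivAt_id (v g)).div hden hden_ne
    simp only [hval, id_eq, mul_one, one_mul] at this
    exact this
  have h1ne : (fun x : ℝ => x / (S - v g + x)) (v g) ≠ 0 := by
    simp only [hval]
    exact div_ne_zero hvg.ne' hSne
  have h1r : HasDerivAt (fun x : ℝ => (x / (S - v g + x)) ^ p)
      ((S - v g) / S ^ 2 * p * (v g / S) ^ (p - 1)) (v g) := by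
    have := h1.rpow_const (p := p) (Or.inl h1ne)
    simpa [hval] using this
  -- sum terms
  have h2 : ∀ h ∈ Finset.univ.erase g,
      HasDerivAt (fun x : ℝ => (v h / (S - v g + x)) ^ p)
        ((v h * (-1 / S ^ 2)) * p * (v h / S) ^ (p - 1)) (v g) := by
    intro h _
    have hq : HasDerivAt (fun x : ℝ => v h / (S - v g + x))
        (v h * (-1 / S ^ 2)) (v g) := by
      have := (hasDerivAt_const (v g) (v h)).div hden hden_ne
      simp only [hval] at this
      rw [show v h * (-1 / S ^ 2) = (0 * S - v h * 1) / S ^ 2 by ring]; exact this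
    have hne : (fun x : ℝ => v h / (S - v g + x)) (v g) ≠ 0 := by
      simp only [hval]; exact div_ne_zero (hpos h).ne' hSne
    have := hq.rpow_const (p := p) (Or.inl hne)
    simpa [hval] using this
  have hF := h1r.add (HasDerivAt.fun_sum h2)
  have hDg : Dg = (S - v g) / S ^ 2 * p * (v g / S) ^ (p - 1) +
      ∑ h ∈ Finset.univ.erase g, (v h * (-1 / S ^ 2)) * p * (v h / S) ^ (p - 1) :=
    hD.unique hF
  -- algebraic simplification
  set T : ℝ := ∑ h, v h ^ p with hT
  have hTpos : 0 < T := Finset.sum_pos (fun i _ => Real.rpow_pos_of_pos (hpos i) p)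
    Finset.univ_nonempty
  have hsp : 0 < S ^ (p - 1) := Real.rpow_pos_of_pos hSpos _
  set K : ℝ := p / (S ^ 2 * S ^ (p - 1)) with hK
  have hKpos : 0 < K := by positivity
  have hdivr : ∀ a : ℝ, 0 < a → (a / S) ^ (p - 1) = a ^ (p - 1) / S ^ (p - 1) :=
    fun a ha => Real.div_rpow ha.le hSpos.le _
  have hmul : ∀ a : ℝ, 0 < a → a * a ^ (p - 1) = a ^ p := by
    intro a ha
    have h := Real.rpow_add ha 1 (p - 1)
    rw [show (1 : ℝ) + (p - 1) = p by ring, Real.rpow_one] at h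
    exact h.symm
  have he : ∑ x ∈ Finset.univ.erase g, v x ^ p = T - v g ^ p := by
    have h := Finset.add_sum_erase Finset.univ (fun h => v h ^ p) (Finset.mem_univ g)
    rw [hT]; linarith
  have hDgK : Dg = K * (S * (v g) ^ (p - 1) - T) := by
    have h1' : ∀ h ∈ Finset.univ.erase g,
        (v h * (-1 / S ^ 2)) * p * (v h / S) ^ (p - 1) = -K * v h ^ p := by
      intro h _
      rw [hdivr _ (hpos h), hK, ← hmul _ (hpos h)]
      field_simp
    have hsum : ∑ h ∈ Finset.univ.erase g, (v h * (-1 / S ^ 2)) * p * (v h / S) ^ (p - 1)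
        = -K * (T - v g ^ p) := by
      rw [Finset.sum_congr rfl h1', ← Finset.mul_sum, he]
    rw [hDg, hsum, hdivr _ hvg, hK, ← hmul _ hvg]
    field_simp
    ring
  -- sign analysis
  have hat : 0 < v g ^ t := Real.rpow_pos_of_pos hvg t
  have hvgp : v g ^ (p - 1) = (v g ^ t)⁻¹ := by
    rw [show p - 1 = -t by rw [hp]; ring, Real.rpow_neg hvg.le]
  have hθ' : θ = (S / T) ^ ((1 : ℝ) / t) := by rw [hθ, ← hS]
  have hSTpos : 0 < S / T := div_pos hSpos hTpos
  have hθpos : 0 < θ := by rw [hθ']; positivity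
  have hθt : θ ^ t = S / T := by
    rw [hθ', ← Real.rpow_mul hSTpos.le, one_div, inv_mul_cancel₀ ht0.ne', Real.rpow_one]
  have hE : Dg = K * (S / v g ^ t - T) := by
    rw [hDgK, hvgp, div_eq_mul_inv]
  have hlt : 0 < Dg ↔ v g < θ := by
    rw [hE, mul_pos_iff_of_pos_left hKpos, sub_pos, lt_div_iff₀ hat,
      ← Real.rpow_lt_rpow_iff hvg.le hθpos.le ht0, hθt, lt_div_iff₀ hTpos, mul_comm]
  have hkey : S / v g ^ t - T < 0 ↔ θ < v g := by
    rw [sub_neg, div_lt_iff₀ hat, ← Real.rpow_lt_rpow_iff hθpos.le hvg.le ht0, hθt,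
      div_lt_iff₀ hTpos, mul_comm T (v g ^ t)]
  have hgt : Dg < 0 ↔ θ < v g := by
    rw [hE, ← hkey]
    constructor
    · intro h; nlinarith
    · intro h; exact mul_neg_of_pos_of_neg hKpos h
  refine ⟨hlt, ?_, hgt⟩
  constructor
  · intro h
    rcases lt_trichotomy (v g) θ with hc | hc | hc
    · exact absurd (hlt.mpr hc) (by rw [h]; exact lt_irrefl 0)
    · exact hc
    · exact absurd (hgt.mpr hc) (by rw [h]; exact lt_irrefl 0)
  · intro h
    rcases lt_trichotomy Dg 0 with hc | hc | hc
    · exact absurd (hgt.mp hc) (by rw [h]; exact lt_irrefl θ)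
    · exact hc
    · exact absurd (hlt.mp hc) (by rw [h]; exact lt_irrefl θ)
end

section
/- Let G be a nonempty finite index set, v : G → ℝ a vector with strictly positive entries, and t a real number with t > 1. Set S = Σ_h v_h and define the signed fairness metric f(v) = −(Σ_h (v_h/S)^{1-t})^{1/t}. Fix g ∈ G and let D_g be the partial derivative of f with respect to the coordinate v_g at the point v. Define the threshold θ = (Σ_h v_h / Σ_h v_h^{1-t})^{1/t}. Then D_g > 0 if and only if v_g < θ, D_g = 0 if and only if v_g = θ, and D_g < 0 if and only if v_g > θ. -/
open Real Finset Function Filter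

/-- Rich/poor threshold for `t > 1`. Let `S = ∑ h, v h` and consider the signed
fairness metric `f(v) = -(∑ h, (v h / S) ^ (1-t)) ^ (1/t)`. Let `Dg` be the partial
derivative of `f` in the coordinate `v g` at `v`, i.e. the derivative at `x = v g`
of `x ↦ -(∑ h, (update v g x h / ∑ h', update v g x h') ^ (1-t)) ^ (1/t)`.
With threshold `θ = (∑ h, v h / ∑ h, v h ^ (1-t)) ^ (1/t)` we have
`Dg > 0 ↔ v g < θ`, `Dg = 0 ↔ v g = θ`, and `Dg < 0 ↔ v g > θ`. -/
theorem rich_poor_threshold_gt_one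
    {G : Type*} [Fintype G] [Nonempty G] [DecidableEq G] (v : G → ℝ)
    (hpos : ∀ g, 0 < v g) (t : ℝ) (ht : 1 < t)
    (S : ℝ) (hS : S = ∑ h, v h) (g : G) (Dg : ℝ)
    (hD : HasDerivAt
      (fun x : ℝ =>
        -((∑ h, (Function.update v g x h / ∑ h', Function.update v g x h') ^ ((1 : ℝ) - t)) ^
          ((1 : ℝ) / t)))
      Dg (v g))
    (θ : ℝ) (hθ : θ = ((∑ h, v h) / ∑ h, v h ^ ((1 : ℝ) - t)) ^ ((1 : ℝ) / t)) :
    (0 < Dg ↔ v g < θ) ∧ (Dg = 0 ↔ v g = θ) ∧ (Dg < 0 ↔ θ < v g) := by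
  classical
  have ht0 : (0:ℝ) < t := lt_trans one_pos ht
  have hvg : 0 < v g := hpos g
  set w : ℝ := v g with hw
  set c : ℝ := ∑ h ∈ Finset.univ \ {g}, v h with hc
  set A : ℝ := ∑ h ∈ Finset.univ \ {g}, v h ^ ((1:ℝ) - t) with hA
  have hc0 : 0 ≤ c := Finset.sum_nonneg fun h _ => (hpos h).le
  have hA0 : 0 ≤ A := Finset.sum_nonneg fun h _ => Real.rpow_nonneg (hpos h).le _
  -- sums of updated vectors
  have hsum1 : ∀ x : ℝ, (∑ h', Function.update v g x h') = x + c := by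
    intro x
    rw [Finset.sum_update_of_mem (Finset.mem_univ g)]
  have hsum2 : ∀ x : ℝ, (∑ h, (Function.update v g x h) ^ ((1:ℝ) - t)) = x ^ ((1:ℝ)-t) + A := by
    intro x
    have hpt : ∀ h, (Function.update v g x h) ^ ((1:ℝ) - t)
        = Function.update (fun h => v h ^ ((1:ℝ)-t)) g (x ^ ((1:ℝ)-t)) h := by
      intro h
      exact Function.apply_update (fun _ y => y ^ ((1:ℝ)-t)) v g x h
    simp_rw [hpt]
    rw [Finset.sum_update_of_mem (Finset.mem_univ g)]
  have hupdself : ∀ h, Function.update v g w h = v h := by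
    intro h
    rcases eq_or_ne h g with rfl | hne
    · simp [hw]
    · simp [Function.update_of_ne hne]
  have hSv : S = w + c := by
    rw [hS, ← hsum1 w]
    exact Finset.sum_congr rfl fun h _ => (hupdself h).symm
  have hSp : 0 < w + c := by positivity
  have hB : (∑ h, v h ^ ((1:ℝ) - t)) = w ^ ((1:ℝ)-t) + A := by
    rw [← hsum2 w]
    exact Finset.sum_congr rfl fun h _ => by rw [hupdself h]
  set B : ℝ := w ^ ((1:ℝ)-t) + A with hBdef
  have hBpos : 0 < B := by
    have : 0 < w ^ ((1:ℝ)-t) := Real.rpow_pos_of_pos hvg _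
    rw [hBdef]; linarith
  -- the closed form
  set φ : ℝ → ℝ := fun x => -(((x ^ ((1:ℝ)-t) + A) / (x + c) ^ ((1:ℝ)-t)) ^ ((1:ℝ)/t)) with hφdef
  have heq : ∀ x ∈ Set.Ioi (0:ℝ),
      (fun x : ℝ =>
        -((∑ h, (Function.update v g x h / ∑ h', Function.update v g x h') ^ ((1 : ℝ) - t)) ^
          ((1 : ℝ) / t))) x = φ x := by
    intro x hx
    have hx0 : 0 < x := hx
    have hupd : ∀ h, 0 < Function.update v g x h := by
      intro h
      rcases eq_or_ne h g with rfl | hne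
      · simpa using hx0
      · simpa [Function.update_of_ne hne] using hpos h
    have hT : 0 < x + c := by positivity
    have e1 : (∑ h, (Function.update v g x h / ∑ h', Function.update v g x h') ^ ((1:ℝ)-t))
        = (x ^ ((1:ℝ)-t) + A) / (x + c) ^ ((1:ℝ)-t) := by
      rw [hsum1 x]
      rw [Finset.sum_congr rfl fun h _ => Real.div_rpow (hupd h).le hT.le ((1:ℝ)-t)]
      rw [← Finset.sum_div, hsum2 x]
    simp only [e1, hφdef]
  -- derivative of closed form
  have hQne : ((w + c) : ℝ) ^ ((1:ℝ)-t) ≠ 0 := (Real.rpow_pos_of_pos hSp _).ne'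
  have hN : HasDerivAt (fun x : ℝ => x ^ ((1:ℝ)-t) + A)
      (((1:ℝ)-t) * w ^ ((1:ℝ)-t-1)) w :=
    (Real.hasDerivAt_rpow_const (Or.inl hvg.ne')).add_const A
  have hQ : HasDerivAt (fun x : ℝ => (x + c) ^ ((1:ℝ)-t))
      (1 * ((1:ℝ)-t) * (w + c) ^ ((1:ℝ)-t-1)) w := by
    have h1 : HasDerivAt (fun x : ℝ => x + c) 1 w := (hasDerivAt_id w).add_const c
    exact h1.rpow_const (Or.inl hSp.ne')
  have hR := hN.div hQ hQne
  have hRpos : 0 < (w ^ ((1:ℝ)-t) + A) / (w + c) ^ ((1:ℝ)-t) := by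
    refine div_pos ?_ (Real.rpow_pos_of_pos hSp _)
    have : 0 < w ^ ((1:ℝ)-t) := Real.rpow_pos_of_pos hvg _
    linarith
  have hφ' := (hR.rpow_const (p := (1:ℝ)/t) (Or.inl hRpos.ne')).neg
  have hF := hφ'.congr_of_eventuallyEq
    (Filter.eventuallyEq_of_mem (Ioi_mem_nhds hvg) heq)
  have hDg := hD.unique hF
  -- exponent algebra
  have hexp : (1:ℝ) - t - 1 = -t := by ring
  have hwmt : w ^ ((1:ℝ)-t-1) = w ^ (-t) := by rw [hexp]
  have hSmt : (w + c) ^ ((1:ℝ)-t-1) = (w + c) ^ (-t) := by rw [hexp]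
  have hSplit : (w + c) ^ ((1:ℝ)-t) = (w + c) * (w + c) ^ (-t) := by
    rw [show (1:ℝ) - t = 1 + (-t) by ring, Real.rpow_add hSp, Real.rpow_one]
  have hSmtpos : 0 < (w + c) ^ (-t) := Real.rpow_pos_of_pos hSp _
  have hrpos : 0 < ((w ^ ((1:ℝ)-t) + A) / (w + c) ^ ((1:ℝ)-t)) ^ ((1:ℝ)/t - 1) :=
    Real.rpow_pos_of_pos hRpos _
  set r : ℝ := ((w ^ ((1:ℝ)-t) + A) / (w + c) ^ ((1:ℝ)-t)) ^ ((1:ℝ)/t - 1) with hr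
  set K : ℝ := (t - 1) / t * (w + c) ^ (-t) / ((w + c) * (w + c) ^ (-t)) ^ 2 * r with hK
  have hKpos : 0 < K := by
    rw [hK]
    have h3 : 0 < (t - 1) / t := by
      apply div_pos (by linarith) ht0
    positivity
  set E : ℝ := (w + c) * w ^ (-t) - B with hE
  have hDKE : Dg = K * E := by
    rw [hDg, hK, hE, hBdef, hwmt, hSmt, hSplit]
    simp only [Pi.div_apply, ← hr]
    have h1 : ((w + c) * (w + c) ^ (-t)) ≠ 0 := by positivity
    field_simp
    ring
  -- sign analysis
  have hwt : 0 < w ^ t := Real.rpow_pos_of_pos hvg _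
  have hwinv : w ^ (-t) = (w ^ t)⁻¹ := by
    rw [Real.rpow_neg hvg.le]
  have hθt : θ ^ t = (w + c) / B := by
    rw [hθ, ← hS, hSv, hB]
    rw [← Real.rpow_mul (div_nonneg hSp.le hBpos.le)]
    rw [show (1:ℝ)/t * t = 1 by field_simp, Real.rpow_one]
  have hθ0 : 0 ≤ θ := by
    rw [hθ]
    exact Real.rpow_nonneg (div_nonneg (Finset.sum_nonneg fun h _ => (hpos h).le)
      (Finset.sum_nonneg fun h _ => Real.rpow_nonneg (hpos h).le _)) _
  have p1 : 0 < E ↔ w < θ := by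
    rw [← Real.rpow_lt_rpow_iff hvg.le hθ0 ht0, hθt, hE, hwinv, sub_pos,
      ← div_eq_mul_inv, lt_div_iff₀ hwt, lt_div_iff₀ hBpos, mul_comm]
  have p3 : E < 0 ↔ θ < w := by
    rw [← Real.rpow_lt_rpow_iff hθ0 hvg.le ht0, hθt, hE, hwinv, sub_neg,
      ← div_eq_mul_inv, div_lt_iff₀ hwt, div_lt_iff₀ hBpos, mul_comm]
  have p2 : E = 0 ↔ w = θ := by
    constructor
    · intro h0
      rcases lt_trichotomy w θ with h | h | h
      · exact absurd (p1.mpr h) (by rw [h0]; exact lt_irrefl 0)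
      · exact h
      · exact absurd (p3.mpr h) (by rw [h0]; exact lt_irrefl 0)
    · intro h0
      rcases lt_trichotomy E 0 with h | h | h
      · exact absurd (p3.mp h) (by rw [h0]; exact lt_irrefl θ)
      · exact h
      · exact absurd (p1.mp h) (by rw [h0]; exact lt_irrefl θ)
  refine ⟨?_, ?_, ?_⟩
  · rw [hDKE, ← p1]
    exact mul_pos_iff_of_pos_left hKpos
  · rw [hDKE, ← p2]
    constructor
    · intro h
      rcases mul_eq_zero.mp h with h' | h'
      · exact absurd h' hKpos.ne'
      · exact h'
    · intro h; rw [h, mul_zero]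
  · have hz : K * E < 0 ↔ K * E < K * 0 := by rw [mul_zero]
    rw [hDKE, ← p3, hz, mul_lt_mul_iff_right₀ hKpos]
end

section
/- Let G be a nonempty finite index set, v : G → ℝ a vector with strictly positive entries, and t a real number with t > 0. Set S = Σ_h v_h. Define the gradient-type vector ∇L with components (∇L)_g = v_g^{−t}, the accuracy direction α with components α_g = 1, and the fairness direction η with components η_g = 1 − v_g/S. Define the elasticities E_{r,p} = (v_r/v_p)^{−t} and k = (Σ_{p∈G} Σ_{r∈G, r≠p} v_p^{1−t}·E_{r,p}) / (Σ_{p∈G} v_p^{1−t}). Then the transfer ratio γ = ⟨∇L, η⟩ / ⟨∇L, α⟩ satisfies γ = 1 − 1/(1 + k). -/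
/-- Transfer ratio via elasticities. With `S = ∑ h, v h`, gradient `∇L g = v g ^ (-t)`,
accuracy direction `α g = 1`, fairness direction `η g = 1 - v g / S`, elasticities
`E r p = (v r / v p) ^ (-t)` and
`k = (∑ p, ∑ _{r ≠ p}, v p ^ (1-t) * E r p) / (∑ p, v p ^ (1-t))`, the transfer ratio
`γ = ⟨∇L, η⟩ / ⟨∇L, α⟩` satisfies `γ = 1 - 1 / (1 + k)`. -/
theorem transfer_ratio_eq
    {G : Type*} [Fintype G] [Nonempty G] [DecidableEq G] (v : G → ℝ)
    (hpos : ∀ g, 0 < v g) (t : ℝ) (ht : 0 < t)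
    (S : ℝ) (hS : S = ∑ h, v h)
    (E : G → G → ℝ) (hE : ∀ r p, E r p = (v r / v p) ^ (-t))
    (k : ℝ)
    (hk : k = (∑ p, ∑ r ∈ Finset.univ.erase p, v p ^ ((1 : ℝ) - t) * E r p) /
      (∑ p, v p ^ ((1 : ℝ) - t))) :
    (∑ g, v g ^ (-t) * (1 - v g / S)) / (∑ g, v g ^ (-t) * 1) = 1 - 1 / (1 + k) := by
  set A : ℝ := ∑ g, v g ^ (-t) with hA
  set C : ℝ := ∑ g, v g ^ ((1 : ℝ) - t) with hC
  have hApos : 0 < A := Finset.sum_pos (fun g _ => Real.rpow_pos_of_pos (hpos g) _)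
    Finset.univ_nonempty
  have hCpos : 0 < C := Finset.sum_pos (fun g _ => Real.rpow_pos_of_pos (hpos g) _)
    Finset.univ_nonempty
  have hSpos : 0 < S := hS ▸ Finset.sum_pos (fun g _ => hpos g) Finset.univ_nonempty
  -- simplify the summand of the double sum
  have hterm : ∀ p r : G, v p ^ ((1 : ℝ) - t) * E r p = v p * v r ^ (-t) := by
    intro p r
    rw [hE, Real.div_rpow (hpos r).le (hpos p).le, mul_comm, mul_comm (v p),
      div_mul_eq_mul_div, mul_div_assoc, ← Real.rpow_sub (hpos p)]
    norm_num [Real.rpow_one]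
  -- inner sum
  have hinner : ∀ p : G, (∑ r ∈ Finset.univ.erase p, v p ^ ((1 : ℝ) - t) * E r p)
      = v p * A - v p ^ ((1 : ℝ) - t) := by
    intro p
    rw [Finset.sum_congr rfl (fun r _ => hterm p r),
      Finset.sum_erase_eq_sub (Finset.mem_univ p), ← Finset.mul_sum, ← hA]
    have : v p * v p ^ (-t) = v p ^ ((1 : ℝ) - t) := by
      rw [show ((1 : ℝ) - t) = 1 + -t by ring, Real.rpow_add (hpos p), Real.rpow_one]
    rw [this]
  have hnum : (∑ p, ∑ r ∈ Finset.univ.erase p, v p ^ ((1 : ℝ) - t) * E r p) = S * A - C := by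
    rw [Finset.sum_congr rfl (fun p _ => hinner p), Finset.sum_sub_distrib, ← Finset.sum_mul,
      ← hS, ← hC]
  have hk' : k = (S * A - C) / C := by rw [hk, hnum]
  -- left-hand side
  have hlhs1 : (∑ g, v g ^ (-t) * (1 - v g / S)) = A - C / S := by
    have : ∀ g : G, v g ^ (-t) * (1 - v g / S) = v g ^ (-t) - v g ^ ((1 : ℝ) - t) / S := by
      intro g
      have h1 : v g ^ (-t) * v g = v g ^ ((1 : ℝ) - t) := by
        rw [show ((1 : ℝ) - t) = -t + 1 by ring, Real.rpow_add (hpos g), Real.rpow_one]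
      rw [mul_sub, mul_one, mul_div_assoc', h1]
    rw [Finset.sum_congr rfl (fun g _ => this g), Finset.sum_sub_distrib, ← hA,
      ← Finset.sum_div, ← hC]
  have hlhs2 : (∑ g, v g ^ (-t) * 1) = A := by simp [hA]
  rw [hlhs1, hlhs2, hk']
  have h1k : 1 + (S * A - C) / C = S * A / C := by field_simp; ring
  rw [h1k]
  field_simp
end

section
/- Let G be a finite index set of cardinality n ≥ 1 and let v : G → ℝ be a vector with strictly positive entries. Define the paper's fairness metric at tax base t = −1: f(v;−1) = sign(1−(−1))·(Σ_g v̄_g^{2})^{1/(−1)} = (Σ_g v̄_g^2)^{−1}, where v̄_g = v_g/Σ_h v_h. Then f(v;−1) = (Σ_g v_g)^2 / (Σ_g v_g^2) = n · J(v), where J(v) = (Σ_g v_g)^2 / (n · Σ_g v_g^2) is Jain's fairness index of v. -/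
/-- At tax base `t = -1` the general fairness metric
`f(v;-1) = sign(1-(-1)) · (∑ g, v̄ g ^ (1-(-1))) ^ (1/(-1))` (with
`v̄ g = v g / ∑ h, v h`) equals `(∑ g, v g)^2 / (∑ g, v g ^ 2)`, which is
`n · J(v)` where `J(v) = (∑ g, v g)^2 / (n · ∑ g, v g ^ 2)` is Jain's fairness
index and `n = |G|`. -/
theorem fairness_metric_neg_one_eq_jain
    {G : Type*} [Fintype G] [Nonempty G] (v : G → ℝ)
    (hpos : ∀ g, 0 < v g) :
    (Real.sign (1 - (-1 : ℝ)) *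
          (∑ g, (v g / ∑ h, v h) ^ ((1 : ℝ) - (-1 : ℝ))) ^ ((1 : ℝ) / (-1 : ℝ)) =
        (∑ g, v g) ^ 2 / (∑ g, v g ^ 2)) ∧
      (Real.sign (1 - (-1 : ℝ)) *
          (∑ g, (v g / ∑ h, v h) ^ ((1 : ℝ) - (-1 : ℝ))) ^ ((1 : ℝ) / (-1 : ℝ)) =
        (Fintype.card G : ℝ) *
          ((∑ g, v g) ^ 2 / ((Fintype.card G : ℝ) * ∑ g, v g ^ 2))) := by
  have hS : 0 < ∑ h, v h := Finset.sum_pos (fun h _ => hpos h) Finset.univ_nonempty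
  have hS2 : 0 < ∑ g, v g ^ 2 := Finset.sum_pos (fun g _ => pow_pos (hpos g) 2)
    Finset.univ_nonempty
  have hn : (0:ℝ) < (Fintype.card G : ℝ) := by
    exact_mod_cast Fintype.card_pos
  have hsign : Real.sign (1 - (-1 : ℝ)) = 1 := by
    rw [Real.sign_of_pos]; norm_num
  have hsum : (∑ g, (v g / ∑ h, v h) ^ ((1 : ℝ) - (-1 : ℝ)))
      = (∑ g, v g ^ 2) / (∑ h, v h) ^ 2 := by
    rw [Finset.sum_div]
    refine Finset.sum_congr rfl fun g _ => ?_
    have : ((1:ℝ) - (-1:ℝ)) = ((2:ℕ):ℝ) := by norm_num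
    rw [this, Real.rpow_natCast, div_pow]
  have key : Real.sign (1 - (-1 : ℝ)) *
      (∑ g, (v g / ∑ h, v h) ^ ((1 : ℝ) - (-1 : ℝ))) ^ ((1 : ℝ) / (-1 : ℝ)) =
      (∑ g, v g) ^ 2 / (∑ g, v g ^ 2) := by
    rw [hsign, hsum, one_mul]
    have h1 : ((1:ℝ) / (-1:ℝ)) = ((-1 : ℤ):ℝ) := by norm_num
    rw [h1, Real.rpow_intCast]
    rw [zpow_neg_one, inv_div]
  exact ⟨key, by rw [key]; field_simp⟩
end
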